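/- Let S be a uniformly recurrent connected set over a finite alphabet A with A ⊆ S. Then for any w in S, the set R_S(w) of first right return words to w generates the free group F_A on A. -/

import Mathlib

open List

/-- `u` is a factor of `v`. -/
def IsFactor {A : Type*} (u v : List A) : Prop := ∃ p s : List A, v = p ++ u ++ s

/-- A set of words is factorial if it contains the factors of its elements. -/
def Factorial {A : Type*} (S : Set (List A)) : Prop :=
  ∀ v ∈ S, ∀ u : List A, IsFactor u v → u ∈ S

/-- Left extensions of `w` in `S` taken inside the set `U`. -/
def leftExts {A : Type*} (S U : Set (List A)) (w : List A) : Set (List A) :=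
  {l | l ∈ U ∧ l ++ w ∈ S}

/-- Right extensions of `w` in `S` taken inside the set `V`. -/
def rightExts {A : Type*} (S V : Set (List A)) (w : List A) : Set (List A) :=
  {r | r ∈ V ∧ w ++ r ∈ S}

/-- The generalized extension graph `E_{U,V}(w)`: a bipartite undirected graph on the
disjoint union of `U(w)` and `V(w)`, with an edge between `l` and `r` iff `l ++ w ++ r ∈ S`. -/
def ExtGraph {A : Type*} (S U V : Set (List A)) (w : List A) :
    SimpleGraph (↥(leftExts S U w) ⊕ ↥(rightExts S V w)) where
  Adj x y :=
    (∃ l r, x = Sum.inl l ∧ y = Sum.inr r ∧ l.val ++ w ++ r.val ∈ S) ∨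
    (∃ l r, x = Sum.inr r ∧ y = Sum.inl l ∧ l.val ++ w ++ r.val ∈ S)
  symm := by
    constructor
    rintro x y (⟨l, r, hx, hy, h⟩ | ⟨l, r, hx, hy, h⟩)
    · exact Or.inr ⟨l, r, hy, hx, h⟩
    · exact Or.inl ⟨l, r, hy, hx, h⟩
  loopless := by
    constructor
    rintro x (⟨l, r, hx, hy, _⟩ | ⟨l, r, hx, hy, _⟩) <;> subst hx <;> simp at hy

/-- The set of one-letter words. -/
def letterWords (A : Type*) : Set (List A) := Set.range fun a : A => [a]

/-- The extension graph `E(w)` of `w` in `S` (extensions by letters). -/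
def EGraph {A : Type*} (S : Set (List A)) (w : List A) :=
  ExtGraph S (letterWords A) (letterWords A) w

/-- `S` is biextendable: factorial and every word extends on both sides by a letter. -/
def Biext {A : Type*} (S : Set (List A)) : Prop :=
  Factorial S ∧ ∀ w ∈ S, ∃ a b : A, a :: (w ++ [b]) ∈ S

/-- `S` is an acyclic set. -/
def SAcyclic {A : Type*} (S : Set (List A)) : Prop :=
  Biext S ∧ ∀ w ∈ S, (EGraph S w).IsAcyclic

/-- `S` is a connected set. -/
def SConn {A : Type*} (S : Set (List A)) : Prop :=
  Biext S ∧ ∀ w ∈ S, (EGraph S w).Connected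

/-- `S` is a tree set. -/
def STree {A : Type*} (S : Set (List A)) : Prop :=
  Biext S ∧ ∀ w ∈ S, (EGraph S w).IsTree

/-- A prefix code: nonempty words, none a proper prefix of another. -/
def IsPrefixCode {A : Type*} (X : Set (List A)) : Prop :=
  (∀ x ∈ X, x ≠ []) ∧ ∀ x ∈ X, ∀ y ∈ X, x <+: y → x = y

/-- A suffix code: nonempty words, none a proper suffix of another. -/
def IsSuffixCode {A : Type*} (X : Set (List A)) : Prop :=
  (∀ x ∈ X, x ≠ []) ∧ ∀ x ∈ X, ∀ y ∈ X, x <:+ y → x = y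

/-- A bifix code. -/
def IsBifixCode {A : Type*} (X : Set (List A)) : Prop :=
  IsPrefixCode X ∧ IsSuffixCode X

/-- An `S`-maximal prefix code. -/
def IsSMaxPrefixCode {A : Type*} (S X : Set (List A)) : Prop :=
  IsPrefixCode X ∧ X ⊆ S ∧ ∀ Y : Set (List A), IsPrefixCode Y → Y ⊆ S → X ⊆ Y → X = Y

/-- An `S`-maximal suffix code. -/
def IsSMaxSuffixCode {A : Type*} (S X : Set (List A)) : Prop :=
  IsSuffixCode X ∧ X ⊆ S ∧ ∀ Y : Set (List A), IsSuffixCode Y → Y ⊆ S → X ⊆ Y → X = Y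

/-- An `S`-maximal bifix code. -/
def IsSMaxBifixCode {A : Type*} (S X : Set (List A)) : Prop :=
  IsBifixCode X ∧ X ⊆ S ∧ ∀ Y : Set (List A), IsBifixCode Y → Y ⊆ S → X ⊆ Y → X = Y

/-- The canonical embedding of words over `A` into the free group `F_A`. -/
def toFG {A : Type*} (w : List A) : FreeGroup A := (w.map FreeGroup.of).prod

/-- A subset of a group is free if it is a basis of the subgroup it generates, i.e. the
induced morphism from the free group over it is injective. -/
def IsFreeSubset {G : Type*} [Group G] (X : Set G) : Prop :=
  Function.Injective ⇑(FreeGroup.lift fun x : X => (x : G))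

/-- The submonoid `X*` of `A*` generated by `X`, as a set of words. -/
def star {A : Type*} (X : Set (List A)) : Set (List A) :=
  {w | ∃ l : List (List A), (∀ u ∈ l, u ∈ X) ∧ w = l.flatten}

/-- Every word of `S` is right-extendable by a letter. -/
def RightExtendable {A : Type*} (S : Set (List A)) : Prop :=
  ∀ w ∈ S, ∃ a : A, w ++ [a] ∈ S

/-- `S` is uniformly recurrent. -/
def UnifRecurrent {A : Type*} (S : Set (List A)) : Prop :=
  RightExtendable S ∧
    ∀ u ∈ S, ∃ n : ℕ, 1 ≤ n ∧ ∀ v ∈ S, v.length = n → IsFactor u v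

/-- `S` is recurrent. -/
def Recurrent {A : Type*} (S : Set (List A)) : Prop :=
  S ≠ {([] : List A)} ∧ Factorial S ∧ ∀ u ∈ S, ∀ w ∈ S, ∃ v ∈ S, u ++ v ++ w ∈ S

/-- The set `Γ_S(w)` of right return words to `w`. -/
def retWords {A : Type*} (S : Set (List A)) (w : List A) : Set (List A) :=
  {x | x ∈ S ∧ w ++ x ∈ S ∧ ∃ y : List A, y ≠ [] ∧ w ++ x = y ++ w}

/-- The set `R_S(w)` of first right return words to `w`. -/
def firstRet {A : Type*} (S : Set (List A)) (w : List A) : Set (List A) :=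
  {x | x ∈ retWords S w ∧ ¬ ∃ y ∈ retWords S w, ∃ z : List A, z ≠ [] ∧ x = y ++ z}

/-- The quantity `m(w) = e(w) - l(w) - r(w) + 1`. -/
noncomputable def mval {A : Type*} (S : Set (List A)) (w : List A) : ℤ :=
  (Set.ncard {p : A × A | p.1 :: (w ++ [p.2]) ∈ S} : ℤ)
    - (Set.ncard {a : A | a :: w ∈ S} : ℤ) - (Set.ncard {b : A | w ++ [b] ∈ S} : ℤ) + 1

/-- A strong set: factorial and every word is strong or neutral. -/
def SStrong {A : Type*} (S : Set (List A)) : Prop :=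
  Factorial S ∧ ∀ w ∈ S, 0 ≤ mval S w

/-- A weak set: factorial and every word is weak or neutral. -/
def SWeak {A : Type*} (S : Set (List A)) : Prop :=
  Factorial S ∧ ∀ w ∈ S, mval S w ≤ 0

/-- A neutral set: factorial and every word is neutral. -/
def SNeutral {A : Type*} (S : Set (List A)) : Prop :=
  Factorial S ∧ ∀ w ∈ S, mval S w = 0

namespace Ret4

variable {A : Type*}

lemma toFG_nil : toFG ([] : List A) = 1 := rfl

lemma toFG_cons (c : A) (x : List A) : toFG (c :: x) = FreeGroup.of c * toFG x := by
  simp [toFG]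

lemma toFG_append (x y : List A) : toFG (x ++ y) = toFG x * toFG y := by
  simp [toFG]

lemma toFG_singleton (c : A) : toFG [c] = FreeGroup.of c := by
  simp [toFG]

lemma toFG_flatten (l : List (List A)) : toFG l.flatten = (l.map toFG).prod := by
  induction l with
  | nil => rfl
  | cons a l ih => simp [toFG_append, ih]

lemma isFactor_iff_infix {u v : List A} : IsFactor u v ↔ u <:+: v :=
  ⟨fun ⟨p, s, h⟩ => ⟨p, s, h.symm⟩, fun ⟨p, s, h⟩ => ⟨p, s, h.symm⟩⟩

lemma infix_mem {S : Set (List A)} (hf : Factorial S) {u v : List A}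
    (hv : v ∈ S) (h : u <:+: v) : u ∈ S := by
  obtain ⟨p, s, h⟩ := h
  exact hf v hv u ⟨p, s, h.symm⟩

lemma suffix_of_suffix_le {l w M : List A} (h1 : w <:+ l) (h2 : M <:+ l)
    (h : w.length ≤ M.length) : w <:+ M := by
  rw [← List.reverse_prefix] at h1 h2 ⊢
  exact List.prefix_of_prefix_length_le h1 h2 (by simpa using h)

end Ret4
namespace Ret4

variable {A : Type*}

/-- Edge of the Rauzy graph: from `p` to the suffix of `p ++ [c]`, labelled `c`. -/
def Edge' (S : Set (List A)) (p q : List A) (c : A) : Prop :=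
  p ++ [c] ∈ S ∧ q = (p ++ [c]).drop 1

/-- Directed path in the Rauzy graph from `u` to `u'` with label `x`. -/
def DReach' (S : Set (List A)) : List A → List A → List A → Prop
  | u, u', [] => u' = u
  | u, u', c :: x => ∃ q, Edge' S u q c ∧ DReach' S q u' x

/-- Signed (undirected) walk in the Rauzy graph from `v` to the indexed vertex,
with label in the free group. -/
inductive Reach' (S : Set (List A)) (v : List A) : List A → FreeGroup A → Prop
  | refl : Reach' S v v 1
  | forward {u q c g} : Reach' S v u g → Edge' S u q c →
      Reach' S v q (g * FreeGroup.of c)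
  | backward {u p c g} : Reach' S v u g → Edge' S p u c →
      Reach' S v p (g * (FreeGroup.of c)⁻¹)

/-- Subgroup generated by the labels of directed loops at `v`. -/
def Kgrp (S : Set (List A)) (v : List A) : Subgroup (FreeGroup A) :=
  Subgroup.closure {g | ∃ x, DReach' S v v x ∧ g = toFG x}

lemma Edge'.memS {S : Set (List A)} {p q : List A} {c : A} (hf : Factorial S)
    (h : Edge' S p q c) : q ∈ S := by
  rw [h.2]; exact infix_mem hf h.1 (List.drop_suffix _ _).isInfix

lemma Edge'.memS_left {S : Set (List A)} {p q : List A} {c : A} (hf : Factorial S)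
    (h : Edge' S p q c) : p ∈ S :=
  infix_mem hf h.1 (List.prefix_append _ _).isInfix

lemma Edge'.len {S : Set (List A)} {p q : List A} {c : A} (h : Edge' S p q c) :
    q.length = p.length := by
  rw [h.2]; simp

lemma drop_one_append (u : List A) (c : A) (x : List A) :
    (u ++ c :: x).drop 1 = (u ++ [c]).drop 1 ++ x := by
  rw [show u ++ c :: x = (u ++ [c]) ++ x by simp, List.drop_append]
  have : 1 - (u ++ [c]).length = 0 := by simp
  rw [this, List.drop_zero]

lemma dreach_nil {S : Set (List A)} {u : List A} : DReach' S u u [] := rfl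

lemma dreach_append {S : Set (List A)} :
    ∀ {x : List A} {u u' u'' : List A} (_ : DReach' S u u' x)
      {y : List A} (_ : DReach' S u' u'' y), DReach' S u u'' (x ++ y) := by
  intro x
  induction x with
  | nil => intro u u' u'' h1 y h2; have : u' = u := h1; subst this; exact h2
  | cons c x ih =>
    intro u u' u'' h1 y h2
    obtain ⟨q, he, hd⟩ := h1
    exact ⟨q, he, ih hd h2⟩

lemma dreach_endpoint {S : Set (List A)} :
    ∀ {x u u' : List A}, DReach' S u u' x → u' = (u ++ x).drop x.length := by
  intro x
  induction x with
  | nil => intro u u' h; have h' : u' = u := h; simpa using h'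
  | cons c x ih =>
    intro u u' h
    obtain ⟨q, he, hd⟩ := h
    have h1 := ih hd
    rw [h1, he.2, ← drop_one_append, List.drop_drop]
    simp [Nat.add_comm]

lemma dreach_len {S : Set (List A)} {x u u' : List A} (h : DReach' S u u' x) :
    u'.length = u.length := by
  rw [dreach_endpoint h]; simp

lemma dreach_memS {S : Set (List A)} (hf : Factorial S) :
    ∀ {x u u' : List A}, DReach' S u u' x → u ∈ S → u' ∈ S := by
  intro x
  induction x with
  | nil => intro u u' h hu; have : u' = u := h; subst this; exact hu
  | cons c x ih =>
    intro u u' h hu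
    obtain ⟨q, he, hd⟩ := h
    exact ih hd (he.memS hf)

end Ret4
namespace Ret4

variable {A : Type*}

lemma reach_trans {S : Set (List A)} {v u : List A} {g : FreeGroup A}
    (h1 : Reach' S v u g) : ∀ {u' : List A} {k : FreeGroup A},
    Reach' S u u' k → Reach' S v u' (g * k) := by
  intro u' k h2
  induction h2 with
  | refl => simpa using h1
  | forward h he ih => rw [← mul_assoc]; exact Reach'.forward ih he
  | backward h he ih => rw [← mul_assoc]; exact Reach'.backward ih he

lemma reach_len {S : Set (List A)} {v u : List A} {g : FreeGroup A}
    (h : Reach' S v u g) : u.length = v.length := by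
  induction h with
  | refl => rfl
  | forward h he ih => rw [he.len, ih]
  | backward h he ih =>
      have := he.len
      omega

lemma reach_memS {S : Set (List A)} (hf : Factorial S) {v u : List A} {g : FreeGroup A}
    (hv : v ∈ S) (h : Reach' S v u g) : u ∈ S := by
  induction h with
  | refl => exact hv
  | forward h he ih => exact he.memS hf
  | backward h he ih => exact he.memS_left hf

lemma path_of_word {S : Set (List A)} (hf : Factorial S) :
    ∀ (r u : List A), u ++ r ∈ S → DReach' S u ((u ++ r).drop r.length) r := by
  intro r
  induction r with
  | nil => intro u h; show (u ++ ([] : List A)).drop ([] : List A).length = u; simp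
  | cons c r ih =>
    intro u h
    have hc : u ++ [c] ∈ S := by
      refine infix_mem hf h ?_
      exact ⟨[], r, by simp⟩
    refine ⟨(u ++ [c]).drop 1, ⟨hc, rfl⟩, ?_⟩
    have hmem : (u ++ [c]).drop 1 ++ r ∈ S := by
      rw [← drop_one_append]
      exact infix_mem hf h (List.drop_suffix _ _).isInfix
    have := ih _ hmem
    have he : ((u ++ [c]).drop 1 ++ r).drop r.length = (u ++ c :: r).drop (c :: r).length := by
      rw [← drop_one_append, List.drop_drop]
      simp [Nat.add_comm]
    rwa [he] at this

/-- Extend a word of `S` on the right by `k` letters. -/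
lemma right_ext_len {S : Set (List A)} (hre : RightExtendable S) :
    ∀ (k : ℕ) (u : List A), u ∈ S → ∃ z : List A, z.length = k ∧ u ++ z ∈ S := by
  intro k
  induction k with
  | zero => intro u hu; exact ⟨[], rfl, by simpa using hu⟩
  | succ k ih =>
    intro u hu
    obtain ⟨z, hz, hzS⟩ := ih u hu
    obtain ⟨a, ha⟩ := hre _ hzS
    exact ⟨z ++ [a], by simp [hz], by rwa [← List.append_assoc]⟩

/-- Extend a word of `S` on the left by `k` letters. -/
lemma left_ext_len {S : Set (List A)} (hb : Biext S) :
    ∀ (k : ℕ) (u : List A), u ∈ S → ∃ z : List A, z.length = k ∧ z ++ u ∈ S := by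
  intro k
  induction k with
  | zero => intro u hu; exact ⟨[], rfl, by simpa using hu⟩
  | succ k ih =>
    intro u hu
    obtain ⟨a, b, hab⟩ := hb.2 u hu
    have ha : a :: u ∈ S := infix_mem hb.1 hab ⟨[], [b], by simp⟩
    obtain ⟨z, hz, hzS⟩ := ih (a :: u) ha
    exact ⟨z ++ [a], by simp [hz], by simpa using hzS⟩

/-- Recurrence: any two words of `S` occur together in a word of `S`. -/
lemma exists_mid {S : Set (List A)} (hf : Factorial S) (hur : UnifRecurrent S)
    {u u' : List A} (hu : u ∈ S) (hu' : u' ∈ S) : ∃ z, (u ++ z) ++ u' ∈ S := by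
  obtain ⟨N, hN1, hN⟩ := hur.2 u' hu'
  obtain ⟨z0, hz0len, hz0⟩ := right_ext_len hur.1 N u hu
  have hz0S : z0 ∈ S := infix_mem hf hz0 (List.suffix_append _ _).isInfix
  obtain ⟨p, s, hps⟩ := hN z0 hz0S hz0len
  have h2 : ((u ++ p) ++ u') ++ s ∈ S := by
    have he : u ++ z0 = ((u ++ p) ++ u') ++ s := by rw [hps]; simp
    rwa [he] at hz0
  exact ⟨p, infix_mem hf h2 (List.prefix_append _ _).isInfix⟩

/-- Strong connectivity of Rauzy graphs. -/
lemma strong_conn {S : Set (List A)} (hf : Factorial S) (hur : UnifRecurrent S)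
    {p p' : List A} (hp : p ∈ S) (hp' : p' ∈ S) (hl : p.length = p'.length) :
    ∃ x, DReach' S p p' x := by
  obtain ⟨z, hz⟩ := exists_mid hf hur hp hp'
  refine ⟨z ++ p', ?_⟩
  have := path_of_word hf (z ++ p') p (by rwa [List.append_assoc] at hz)
  have he : (p ++ (z ++ p')).drop (z ++ p').length = p' := by
    rw [← List.append_assoc]
    rw [show (z ++ p').length = (p ++ z).length from by simp; omega]
    exact List.drop_left
  rwa [he] at this

end Ret4
namespace Ret4

variable {A : Type*}

lemma mem_Kgrp_of_loop {S : Set (List A)} {v x : List A} (h : DReach' S v v x) :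
    toFG x ∈ Kgrp S v :=
  Subgroup.subset_closure ⟨x, h, rfl⟩

/-- Signed closed walks at `v` have labels in the subgroup generated by directed loops,
provided the Rauzy graph is strongly connected. -/
lemma reach_loop_mem {S : Set (List A)} {v : List A} (hf : Factorial S) (hv : v ∈ S)
    (hconn : ∀ p, p ∈ S → p.length = v.length →
      (∃ s, DReach' S v p s) ∧ (∃ y, DReach' S p v y)) :
    ∀ {u : List A} {g : FreeGroup A}, Reach' S v u g →
      ∀ x, DReach' S u v x → g * toFG x ∈ Kgrp S v := by
  intro u g h
  induction h with
  | refl =>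
    intro x hx
    rw [one_mul]
    exact mem_Kgrp_of_loop hx
  | @forward u q c g h he ih =>
    intro x hx
    have hd : DReach' S u v (c :: x) := ⟨q, he, hx⟩
    have := ih (c :: x) hd
    rw [toFG_cons, ← mul_assoc] at this
    exact this
  | @backward u p c g h he ih =>
    intro x hx
    have hpS : p ∈ S := he.memS_left hf
    have huS : u ∈ S := reach_memS hf hv h
    have hplen : p.length = v.length := by
      have h1 := he.len
      have h2 := reach_len h
      omega
    obtain ⟨s, hs⟩ := (hconn p hpS hplen).1
    obtain ⟨y0, hy0⟩ := (hconn u huS (reach_len h)).2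
    have G1 : g * toFG y0 ∈ Kgrp S v := ih y0 hy0
    have G2 : toFG (s ++ c :: y0) ∈ Kgrp S v :=
      mem_Kgrp_of_loop (dreach_append hs ⟨u, he, hy0⟩)
    have G3 : toFG (s ++ x) ∈ Kgrp S v :=
      mem_Kgrp_of_loop (dreach_append hs hx)
    have key : g * (FreeGroup.of c)⁻¹ * toFG x
        = (g * toFG y0) * (toFG (s ++ c :: y0))⁻¹ * toFG (s ++ x) := by
      rw [toFG_append, toFG_append, toFG_cons]
      group
    rw [key]
    exact mul_mem (mul_mem G1 (inv_mem G2)) G3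

/-- All short factors of the word traced by a directed path are in `S`. -/
lemma factor_window {S : Set (List A)} (hf : Factorial S) :
    ∀ {x u u' : List A}, DReach' S u u' x → u ∈ S →
      ∀ f : List A, IsFactor f (u ++ x) → f.length ≤ u.length + 1 → f ∈ S := by
  intro x
  induction x with
  | nil =>
    intro u u' h hu f hfac hlen
    rw [isFactor_iff_infix] at hfac
    rw [List.append_nil] at hfac
    exact infix_mem hf hu hfac
  | cons c x ih =>
    intro u u' h hu f hfac hlen
    obtain ⟨q, he, hd⟩ := h
    obtain ⟨p, s, hps⟩ := hfac
    match p with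
    | [] =>
      -- f is a prefix of u ++ c :: x, and short, hence a prefix of u ++ [c]
      have hpre : f <+: u ++ c :: x := ⟨s, by rw [hps]; simp⟩
      have hpre2 : (u ++ [c]) <+: u ++ c :: x := ⟨x, by simp⟩
      have : f <+: u ++ [c] := by
        refine List.prefix_of_prefix_length_le hpre hpre2 ?_
        simpa using hlen
      exact infix_mem hf he.1 this.isInfix
    | d :: p' =>
      -- f is a factor of (u ++ c :: x).drop 1 = q ++ x
      have hq : q ++ x = (u ++ c :: x).drop 1 := by
        rw [drop_one_append, he.2]
      have hfac' : IsFactor f (q ++ x) := by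
        refine ⟨p', s, ?_⟩
        rw [hq, hps]
        simp
      have hql : q.length = u.length := by rw [he.2]; simp
      exact ih hd (he.memS hf) f hfac' (by omega)

end Ret4
namespace Ret4

variable {A : Type*}

/-- Interpretation of a vertex of the extension graph as a Rauzy-graph vertex. -/
def vWord (S : Set (List A)) (t : List A) :
    (↥(leftExts S (letterWords A) t) ⊕ ↥(rightExts S (letterWords A) t)) → List A
  | Sum.inl l => l.val ++ t
  | Sum.inr r => t ++ r.val

/-- Pending label of a vertex of the extension graph. -/
def vLab (S : Set (List A)) (t : List A) :
    (↥(leftExts S (letterWords A) t) ⊕ ↥(rightExts S (letterWords A) t)) → FreeGroup A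
  | Sum.inl _ => 1
  | Sum.inr r => toFG r.val

lemma adj_reach {S : Set (List A)} {t : List A}
    {ξ ζ : ↥(leftExts S (letterWords A) t) ⊕ ↥(rightExts S (letterWords A) t)}
    (h : (EGraph S t).Adj ξ ζ) :
    Reach' S (vWord S t ξ) (vWord S t ζ) ((vLab S t ξ)⁻¹ * vLab S t ζ) := by
  have step : ∀ (l : ↥(leftExts S (letterWords A) t)) (r : ↥(rightExts S (letterWords A) t)),
      l.val ++ t ++ r.val ∈ S →
      Reach' S (vWord S t (Sum.inl l)) (vWord S t (Sum.inr r))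
        ((vLab S t (Sum.inl l))⁻¹ * vLab S t (Sum.inr r)) := by
    intro l r hm
    obtain ⟨a, ha⟩ := l.2.1
    obtain ⟨c, hc⟩ := r.2.1
    have ha' : [a] = l.val := ha
    have hc' : [c] = r.val := hc
    simp only [vWord, vLab]
    have he : Edge' S (l.val ++ t) (t ++ r.val) c := by
      constructor
      · have h0 : l.val ++ t ++ [c] = l.val ++ t ++ r.val := by rw [hc']
        rw [h0]; exact hm
      · rw [← ha', ← hc']
        simp
    have h1 := Reach'.forward (Reach'.refl (S := S) (v := l.val ++ t)) he
    have hlab : (1 : FreeGroup A)⁻¹ * toFG r.val = 1 * FreeGroup.of c := by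
      rw [← hc', toFG_singleton, inv_one]
    rw [hlab]
    exact h1
  rcases h with ⟨l, r, hx, hy, hm⟩ | ⟨l, r, hx, hy, hm⟩
  · subst hx; subst hy; exact step l r hm
  · subst hx; subst hy
    have h1 := step l r hm
    -- reverse it
    obtain ⟨c, hc⟩ := r.2.1
    have hc' : [c] = r.val := hc
    simp only [vWord, vLab] at h1 ⊢
    have he : Edge' S (l.val ++ t) (t ++ r.val) c := by
      constructor
      · have h0 : l.val ++ t ++ [c] = l.val ++ t ++ r.val := by rw [hc']
        rw [h0]; exact hm
      · obtain ⟨a, ha⟩ := l.2.1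
        have ha' : [a] = l.val := ha
        rw [← ha', ← hc']
        simp
    have h2 := Reach'.backward (Reach'.refl (S := S) (v := t ++ r.val)) he
    have hlab : (toFG r.val)⁻¹ * (1 : FreeGroup A) = 1 * (FreeGroup.of c)⁻¹ := by
      rw [← hc', toFG_singleton, mul_one, one_mul]
    rw [hlab]
    exact h2

lemma walk_reach {S : Set (List A)} {t : List A}
    {ξ ζ : ↥(leftExts S (letterWords A) t) ⊕ ↥(rightExts S (letterWords A) t)}
    (p : (EGraph S t).Walk ξ ζ) :
    Reach' S (vWord S t ξ) (vWord S t ζ) ((vLab S t ξ)⁻¹ * vLab S t ζ) := by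
  induction p with
  | nil => rw [inv_mul_cancel]; exact Reach'.refl
  | cons h p ih =>
    have h1 := adj_reach h
    have h2 := reach_trans h1 ih
    simpa [mul_assoc] using h2

/-- Connector: from a left extension `a :: t` to a right extension `t ++ [c]`,
with signed label `of c`. -/
lemma connector1 {S : Set (List A)} {t : List A}
    (hconn2 : ∀ u ∈ S, (EGraph S u).Connected) (ht : t ∈ S)
    {a c : A} (ha : a :: t ∈ S) (hc : t ++ [c] ∈ S) :
    Reach' S (a :: t) (t ++ [c]) (FreeGroup.of c) := by
  have hl : ([a] : List A) ∈ leftExts S (letterWords A) t := ⟨⟨a, rfl⟩, ha⟩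
  have hr : ([c] : List A) ∈ rightExts S (letterWords A) t := ⟨⟨c, rfl⟩, hc⟩
  obtain ⟨p⟩ := (hconn2 t ht).preconnected (Sum.inl ⟨[a], hl⟩) (Sum.inr ⟨[c], hr⟩)
  have := walk_reach p
  simp only [vWord, vLab, toFG_singleton] at this
  simpa using this

/-- Connector between two left extensions, with trivial signed label. -/
lemma connector2 {S : Set (List A)} {t : List A}
    (hconn2 : ∀ u ∈ S, (EGraph S u).Connected) (ht : t ∈ S)
    {a d : A} (ha : a :: t ∈ S) (hd : d :: t ∈ S) :
    Reach' S (a :: t) (d :: t) 1 := by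
  have hl : ([a] : List A) ∈ leftExts S (letterWords A) t := ⟨⟨a, rfl⟩, ha⟩
  have hl' : ([d] : List A) ∈ leftExts S (letterWords A) t := ⟨⟨d, rfl⟩, hd⟩
  obtain ⟨p⟩ := (hconn2 t ht).preconnected (Sum.inl ⟨[a], hl⟩) (Sum.inl ⟨[d], hl'⟩)
  have := walk_reach p
  simp only [vWord, vLab] at this
  simpa using this

end Ret4
namespace Ret4

variable {A : Type*}

/-- Lifting a directed path of the order-`n` Rauzy graph to a signed walk of the
order-`n+1` Rauzy graph, via connectedness of extension graphs. -/
lemma liftC {S : Set (List A)} (hf : Factorial S)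
    (hconn2 : ∀ u ∈ S, (EGraph S u).Connected) :
    ∀ (x u u' : List A), DReach' S u u' x → u ∈ S →
      ∀ b, b :: u ∈ S → ∃ d, d :: u' ∈ S ∧ Reach' S (b :: u) (d :: u') (toFG x) := by
  intro x
  induction x with
  | nil =>
    intro u u' hd hu b hb
    have : u' = u := hd
    subst this
    exact ⟨b, hb, by rw [toFG_nil]; exact Reach'.refl⟩
  | cons c x ih =>
    intro u u' hd hu b hb
    obtain ⟨q, he, hd'⟩ := hd
    have hne : u ++ [c] ≠ [] := by simp
    obtain ⟨e, q0, he0⟩ := List.exists_cons_of_ne_nil hne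
    have hq0 : q = q0 := by rw [he.2, he0]; rfl
    subst hq0
    have hcons : u ++ [c] = e :: q := he0
    have hqS : q ∈ S := he.memS hf
    have heq : e :: q ∈ S := by rw [← hcons]; exact he.1
    obtain ⟨d, hdS, hr⟩ := ih q u' hd' hqS e heq
    have hr1 : Reach' S (b :: u) (u ++ [c]) (FreeGroup.of c) :=
      connector1 hconn2 hu hb he.1
    rw [← hcons] at hr
    refine ⟨d, hdS, ?_⟩
    rw [toFG_cons]
    exact reach_trans hr1 hr

/-- The key step: the loop group at `v.tail` is contained in the loop group at `v`. -/
lemma crux {S : Set (List A)} (hS : SConn S) (hur : UnifRecurrent S)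
    {v : List A} (hv : v ∈ S) (hne : v ≠ []) :
    Kgrp S v.tail ≤ Kgrp S v := by
  have hf : Factorial S := hS.1.1
  obtain ⟨a, t, rfl⟩ := List.exists_cons_of_ne_nil hne
  show Kgrp S t ≤ Kgrp S (a :: t)
  rw [Kgrp, Subgroup.closure_le]
  rintro g ⟨x, hx, rfl⟩
  have ht : t ∈ S := infix_mem hf hv ⟨[a], [], by simp⟩
  obtain ⟨d, hdS, hr⟩ := liftC hf hS.2 x t t hx ht a hv
  have hr2 : Reach' S (d :: t) (a :: t) 1 := connector2 hS.2 ht hdS hv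
  have hrr : Reach' S (a :: t) (a :: t) (toFG x * 1) := reach_trans hr hr2
  have hconn : ∀ p, p ∈ S → p.length = (a :: t).length →
      (∃ s, DReach' S (a :: t) p s) ∧ (∃ y, DReach' S p (a :: t) y) := by
    intro p hp hlen
    exact ⟨strong_conn hf hur hv hp hlen.symm, strong_conn hf hur hp hv hlen⟩
  have := reach_loop_mem hf hv hconn hrr [] dreach_nil
  simpa [toFG_nil] using this

/-- The loop group at the empty word is everything. -/
lemma Kgrp_nil_top {S : Set (List A)} (hA : ∀ a : A, [a] ∈ S) :
    Kgrp S ([] : List A) = ⊤ := by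
  have h1 : ∀ a : A, FreeGroup.of a ∈ Kgrp S ([] : List A) := by
    intro a
    have hd : DReach' S [] [] [a] := ⟨[], ⟨by simpa using hA a, rfl⟩, rfl⟩
    have := mem_Kgrp_of_loop hd
    rwa [toFG_singleton] at this
  refine (Subgroup.eq_top_iff' _).mpr fun g => ?_
  induction g using FreeGroup.induction_on with
  | C1 => exact one_mem _
  | of a => exact h1 a
  | inv_of a ih => exact inv_mem ih
  | mul x y ihx ihy => exact mul_mem ihx ihy

end Ret4
namespace Ret4

variable {A : Type*}

lemma star_append {X : Set (List A)} {x y : List A}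
    (hx : x ∈ star X) (hy : y ∈ star X) : x ++ y ∈ star X := by
  obtain ⟨l1, h1, rfl⟩ := hx
  obtain ⟨l2, h2, rfl⟩ := hy
  refine ⟨l1 ++ l2, ?_, by simp⟩
  intro u hu
  rcases List.mem_append.1 hu with h | h
  · exact h1 u h
  · exact h2 u h

lemma single_star {X : Set (List A)} {x : List A} (hx : x ∈ X) : x ∈ star X :=
  ⟨[x], by intro u hu; simp at hu; subst hu; exact hx, by simp⟩

/-- Every return word is a concatenation of first return words. -/
lemma ret_star {S : Set (List A)} (hf : Factorial S) {w : List A} :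
    ∀ x ∈ retWords S w, x ∈ star (firstRet S w) := by
  have main : ∀ (n : ℕ) (x : List A), x.length ≤ n → x ∈ retWords S w →
      x ∈ star (firstRet S w) := by
    intro n
    induction n with
    | zero =>
      intro x hlen hx
      exfalso
      obtain ⟨xS, wxS, y, hy, hwx⟩ := hx
      have hx0 : x = [] := List.length_eq_zero_iff.mp (by omega)
      subst hx0
      have hl := congrArg List.length hwx
      simp only [List.length_append, List.length_nil] at hl
      exact hy (List.length_eq_zero_iff.mp (by omega))
    | succ n ih =>
      intro x hlen hx
      by_cases h : ∃ y ∈ retWords S w, ∃ z : List A, z ≠ [] ∧ x = y ++ z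
      · obtain ⟨y, hy, z, hz, rfl⟩ := h
        obtain ⟨xS, wxS, q, hq, hwx⟩ := hx
        have hy' := hy
        obtain ⟨yS, wyS, p, hp, hwy⟩ := hy'
        have hkey : w ++ (y ++ z) = p ++ (w ++ z) := by
          rw [← List.append_assoc, hwy, List.append_assoc]
        have hsufwz : (w ++ z) <:+ (w ++ (y ++ z)) := ⟨p, hkey.symm⟩
        have wzS : w ++ z ∈ S := infix_mem hf wxS hsufwz.isInfix
        have zS : z ∈ S := infix_mem hf wzS ⟨w, [], by simp⟩
        have hwsuf : w <:+ (w ++ (y ++ z)) := ⟨q, hwx.symm⟩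
        have hwz : w <:+ (w ++ z) :=
          suffix_of_suffix_le hwsuf hsufwz (by simp)
        obtain ⟨q', hq'⟩ := hwz
        have hq'ne : q' ≠ [] := by
          intro h0
          subst h0
          have hc := congrArg List.length hq'
          simp only [List.length_append, List.length_nil] at hc
          exact hz (List.length_eq_zero_iff.mp (by omega))
        have hzret : z ∈ retWords S w := ⟨zS, wzS, q', hq'ne, hq'.symm⟩
        have hyne : y ≠ [] := by
          intro h0
          subst h0
          have hc := congrArg List.length hwy
          simp only [List.length_append, List.length_nil] at hc
          exact hp (List.length_eq_zero_iff.mp (by omega))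
        have hylen : y.length ≤ n := by
          have h1 : 1 ≤ z.length := List.length_pos_iff.mpr hz
          have h2 : (y ++ z).length = y.length + z.length := List.length_append
          simp at hlen
          omega
        have hzlen : z.length ≤ n := by
          have h1 : 1 ≤ y.length := List.length_pos_iff.mpr hyne
          simp at hlen
          omega
        exact star_append (ih y hylen hy) (ih z hzlen hzret)
      · exact single_star ⟨hx, h⟩
  intro x hx
  exact main x.length x le_rfl hx

lemma toFG_star_mem {X : Set (List A)} {H : Subgroup (FreeGroup A)}
    (h : ∀ y ∈ X, toFG y ∈ H) : ∀ x ∈ star X, toFG x ∈ H := by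
  rintro x ⟨l, hl, rfl⟩
  rw [toFG_flatten]
  refine Subgroup.list_prod_mem _ ?_
  intro g hg
  obtain ⟨y, hy, rfl⟩ := List.mem_map.1 hg
  exact h y (hl y hy)

end Ret4
namespace Ret4

variable {A : Type*}

lemma take_append_long (w x : List A) (j : ℕ) :
    (w ++ x).take (w.length + j) = w ++ x.take j := by
  rw [List.take_append]
  congr 1
  · exact List.take_of_length_le (by omega)
  · congr 1
    omega

/-- Decomposition of long loops on `w` into return words. -/
lemma decomp {S : Set (List A)} (hf : Factorial S) {w : List A} {m : ℕ}
    (hm : ∀ v ∈ S, v.length = m → IsFactor w v) (hwm : w.length ≤ m) :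
    ∀ x : List A, (∀ f : List A, IsFactor f (w ++ x) → f.length ≤ m + 1 → f ∈ S) →
      w <:+ (w ++ x) → x ∈ star (retWords S w) := by
  have main : ∀ (n : ℕ) (x : List A), x.length ≤ n →
      (∀ f : List A, IsFactor f (w ++ x) → f.length ≤ m + 1 → f ∈ S) →
      w <:+ (w ++ x) → x ∈ star (retWords S w) := by
    intro n
    induction n with
    | zero =>
      intro x hlen _ _
      have : x = [] := List.length_eq_zero_iff.mp (by omega)
      subst this
      exact ⟨[], by simp, by simp⟩
    | succ n ih =>
      intro x hlen hfac hsuf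
      rcases eq_or_ne x [] with rfl | hxne
      · exact ⟨[], by simp, by simp⟩
      have hxpos : 1 ≤ x.length := List.length_pos_iff.mpr hxne
      have claim : ∃ (j : ℕ) (y : List A), 1 ≤ j ∧ j ≤ x.length ∧ w.length + j ≤ m + 1 ∧
          y.length = j ∧ y ++ w = w ++ x.take j := by
        by_cases hcase : w.length + x.length ≤ m + 1
        · obtain ⟨y, hy⟩ := hsuf
          refine ⟨x.length, y, hxpos, le_rfl, hcase, ?_, ?_⟩
          · have hyl := congrArg List.length hy
            simp only [List.length_append] at hyl
            omega
          · rw [List.take_length]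
            exact hy
        · push_neg at hcase
          set W := (w ++ x).take (m + 1) with hW
          have hlenwx : m + 1 ≤ (w ++ x).length := by simp; omega
          have hWlen : W.length = m + 1 := by
            rw [hW, List.length_take]
            omega
          have h1W : (w ++ x).take 1 = W.take 1 := by
            rw [hW, List.take_take, Nat.min_eq_left (by omega)]
          have hWsplit : (w ++ x).take 1 ++ W.drop 1 = W := by
            rw [h1W, List.take_append_drop]
          have hW'len : (W.drop 1).length = m := by
            rw [List.length_drop, hWlen]
            omega
          have hW'fac : IsFactor (W.drop 1) (w ++ x) := by
            refine ⟨(w ++ x).take 1, (w ++ x).drop (m + 1), ?_⟩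
            rw [hWsplit, hW, List.take_append_drop]
          have hW'S : (W.drop 1) ∈ S := hfac _ hW'fac (by omega)
          obtain ⟨p, s, hps⟩ := hm _ hW'S hW'len
          have hplen : p.length + w.length + s.length = m := by
            have := congrArg List.length hps
            simp only [List.length_append] at this
            omega
          have hdecomp : w ++ x = (((w ++ x).take 1 ++ p) ++ w) ++ (s ++ (w ++ x).drop (m + 1)) := by
            conv_lhs => rw [← List.take_append_drop (m + 1) (w ++ x), ← hW, ← hWsplit, hps]
            simp
          set y := (w ++ x).take 1 ++ p with hy
          have hylen : y.length = p.length + 1 := by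
            rw [hy, List.length_append, List.length_take, Nat.min_eq_left (by omega)]
            omega
          set j := p.length + 1 with hj
          have hpre : (y ++ w) <+: (w ++ x) := ⟨s ++ (w ++ x).drop (m + 1), hdecomp.symm⟩
          refine ⟨j, y, by omega, by omega, by omega, hylen, ?_⟩
          have h1 := List.prefix_iff_eq_take.mp hpre
          rw [h1, List.length_append, hylen]
          rw [show p.length + 1 + w.length = w.length + j from by omega]
          exact take_append_long w x j
      obtain ⟨j, y, hj1, hjx, hjm, hylen, hyweq⟩ := claim
      have hx1len : (x.take j).length = j := by
        rw [List.length_take]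
        omega
      have hwx1fac : IsFactor (w ++ x.take j) (w ++ x) := by
        refine ⟨[], x.drop j, ?_⟩
        rw [List.nil_append, List.append_assoc, List.take_append_drop]
      have hwx1S : w ++ x.take j ∈ S := hfac _ hwx1fac (by simp; omega)
      have hx1S : x.take j ∈ S := infix_mem hf hwx1S ⟨w, [], by simp⟩
      have hyne : y ≠ [] := by
        intro h0
        rw [h0] at hylen
        simp at hylen
        omega
      have hx1ret : x.take j ∈ retWords S w := ⟨hx1S, hwx1S, y, hyne, hyweq.symm⟩
      have hkey : w ++ x = y ++ (w ++ x.drop j) := by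
        conv_lhs => rw [← List.take_append_drop j x, ← List.append_assoc, ← hyweq]
        simp
      have hsuf2wx : (w ++ x.drop j) <:+ (w ++ x) := ⟨y, hkey.symm⟩
      have hfac2 : ∀ f : List A, IsFactor f (w ++ x.drop j) → f.length ≤ m + 1 → f ∈ S := by
        intro f hff hfl
        refine hfac f ?_ hfl
        rw [isFactor_iff_infix] at hff ⊢
        exact hff.trans hsuf2wx.isInfix
      have hsuf2 : w <:+ (w ++ x.drop j) :=
        suffix_of_suffix_le hsuf hsuf2wx (by simp)
      have hx2len : (x.drop j).length ≤ n := by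
        rw [List.length_drop]
        omega
      have hstar2 := ih (x.drop j) hx2len hfac2 hsuf2
      have := star_append (single_star hx1ret) hstar2
      rwa [List.take_append_drop] at this
  intro x hfac hsuf
  exact main x.length x le_rfl hfac hsuf

end Ret4
open Ret4

theorem statement4' {A : Type*} [Fintype A] (S : Set (List A)) (hS : SConn S)
    (hur : UnifRecurrent S) (hA : ∀ a : A, [a] ∈ S) (w : List A) (hw : w ∈ S) :
    Subgroup.closure (toFG '' firstRet S w) = (⊤ : Subgroup (FreeGroup A)) := by
  classical
  have hf : Factorial S := hS.1.1
  obtain ⟨N, hN1, hN⟩ := hur.2 w hw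
  set m := max N w.length with hm_def
  have hmN : N ≤ m := le_max_left _ _
  have hwm : w.length ≤ m := le_max_right _ _
  have hm : ∀ v ∈ S, v.length = m → IsFactor w v := by
    intro v hv hvlen
    have htake : v.take N ∈ S := infix_mem hf hv (List.take_prefix _ _).isInfix
    have hlen : (v.take N).length = N := by rw [List.length_take]; omega
    have h1 := hN _ htake hlen
    rw [isFactor_iff_infix] at h1 ⊢
    exact h1.trans (List.take_prefix _ _).isInfix
  obtain ⟨z, hzlen, hzS⟩ := left_ext_len hS.1 (m - w.length) w hw
  set u := z ++ w with hu_def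
  have hulen : u.length = m := by rw [hu_def]; simp only [List.length_append]; omega
  have huS : u ∈ S := hzS
  have hwu : w <:+ u := List.suffix_append _ _
  have hchain : ∀ k, k ≤ m → Kgrp S (u.drop (m - k)) = ⊤ := by
    intro k
    induction k with
    | zero =>
      intro _
      rw [Nat.sub_zero, show u.drop m = [] from by rw [← hulen]; exact List.drop_length]
      exact Kgrp_nil_top hA
    | succ k ihk =>
      intro hk
      have hk' : k ≤ m := by omega
      set v := u.drop (m - (k + 1)) with hv_def
      have hvS : v ∈ S := infix_mem hf huS (List.drop_suffix _ _).isInfix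
      have hvlen : v.length = k + 1 := by rw [hv_def, List.length_drop]; omega
      have hvne : v ≠ [] := by intro h0; rw [h0] at hvlen; simp at hvlen
      have htail : v.tail = u.drop (m - k) := by
        rw [hv_def, List.tail_drop]
        congr 1
        omega
      have hle := crux hS hur hvS hvne
      rw [htail, ihk hk'] at hle
      exact top_le_iff.mp hle
  have hKtop : Kgrp S u = ⊤ := by
    have := hchain m le_rfl
    rwa [Nat.sub_self, List.drop_zero] at this
  rw [eq_top_iff, ← hKtop, Kgrp, Subgroup.closure_le]
  rintro g ⟨x, hx, rfl⟩
  have hend : u = (u ++ x).drop x.length := dreach_endpoint hx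
  have husuf : u <:+ u ++ x := by
    conv_lhs => rw [hend]
    exact List.drop_suffix _ _
  have hw_ux : w <:+ u ++ x := hwu.trans husuf
  have hwx_suf : (w ++ x) <:+ (u ++ x) := ⟨z, by rw [hu_def, List.append_assoc]⟩
  have hsuf : w <:+ w ++ x := suffix_of_suffix_le hw_ux hwx_suf (by simp)
  have hfacs : ∀ f : List A, IsFactor f (w ++ x) → f.length ≤ m + 1 → f ∈ S := by
    intro f hff hfl
    refine factor_window hf hx huS f ?_ (by omega)
    rw [isFactor_iff_infix] at hff ⊢
    exact hff.trans hwx_suf.isInfix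
  have hxstar : x ∈ star (retWords S w) := decomp hf hm hwm x hfacs hsuf
  have hH : ∀ y ∈ firstRet S w, toFG y ∈ Subgroup.closure (toFG '' firstRet S w) := by
    intro y hy
    exact Subgroup.subset_closure ⟨y, hy, rfl⟩
  have hret : ∀ y ∈ retWords S w, toFG y ∈ Subgroup.closure (toFG '' firstRet S w) :=
    fun y hy => toFG_star_mem hH y (ret_star hf y hy)
  exact toFG_star_mem hret x hxstar


/-- In a uniformly recurrent connected set containing the alphabet, every set of first
right return words generates the free group on `A`. -/
theorem statement4 {A : Type*} [Fintype A] (S : Set (List A)) (hS : SConn S)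
    (hur : UnifRecurrent S) (hA : ∀ a : A, [a] ∈ S) (w : List A) (hw : w ∈ S) :
    Subgroup.closure (toFG '' firstRet S w) = (⊤ : Subgroup (FreeGroup A)) := by
  exact statement4' S hS hur hA w hw
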